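/- Minimal revision is universal on the class of finite strongly separated epistemic spaces: every finite epistemic space in which no state's observable set is contained in another's is identifiable in the limit by the canonical learning method induced by minimal revision (with the uniform prior). -/
import Mathlib


namespace Epi

variable {W : Type*}

/-- The set of observables true at state `s`. -/
def obsAt (O : Set (Set W)) (s : W) : Set (Set W) := {p ∈ O | s ∈ p}

/-- The epistemic-space separation condition: distinct worlds satisfy distinct observables. -/
def Separating (O : Set (Set W)) : Prop := ∀ s t : W, obsAt O s = obsAt O t → s = t

/-- `≼`-minimal elements of a set `X`. -/
def minIn (R : W → W → Prop) (X : Set W) : Set W :=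
  {s ∈ X | ∀ t ∈ X, (R s t ∨ R t s) → R s t}

def PreorderOn (R : W → W → Prop) : Prop := Reflexive R ∧ Transitive R

def TotalPreorderOn (R : W → W → Prop) : Prop :=
  Reflexive R ∧ Transitive R ∧ ∀ s t : W, R s t ∨ R t s

/-- Strict part of a preorder. -/
def strictR (R : W → W → Prop) (s t : W) : Prop := R s t ∧ ¬ R t s

/-- One-step minimal revision (conservative upgrade) by observable `p`. -/
def miniRev (R : W → W → Prop) (p : Set W) : W → W → Prop :=
  fun s t => (s ∈ minIn R p ∧ t ∉ minIn R p) ∨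
    (R s t ∧ ¬ (t ∈ minIn R p ∧ s ∉ minIn R p))

/-- One-step lexicographic upgrade by observable `p`. -/
def lexRev (R : W → W → Prop) (p : Set W) : W → W → Prop :=
  fun s t => (s ∈ p ∧ t ∈ p ∧ R s t) ∨ (s ∉ p ∧ t ∉ p ∧ R s t) ∨ (s ∈ p ∧ t ∉ p)

/-- Iterated belief revision along a finite data sequence. -/
def iterRev (rev : (W → W → Prop) → Set W → (W → W → Prop))
    (R : W → W → Prop) (σ : List (Set W)) : W → W → Prop :=
  σ.foldl rev R

/-- The initial segment of length `n` of a data stream. -/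
def seg (f : ℕ → Set W) (n : ℕ) : List (Set W) := (List.range n).map f

/-- All elements of the stream are observables. -/
def StreamIn (O : Set (Set W)) (f : ℕ → Set W) : Prop := ∀ n, f n ∈ O

/-- Soundness of a stream w.r.t. `s`. -/
def SoundStream (s : W) (f : ℕ → Set W) : Prop := ∀ n, s ∈ f n

/-- Completeness of a stream w.r.t. `s`. -/
def CompleteStream (O : Set (Set W)) (s : W) (f : ℕ → Set W) : Prop :=
  ∀ p ∈ obsAt O s, ∃ n, f n = p

/-- Canonical learner induced by minimal revision and prior `R`. -/
def miniLearner (R : W → W → Prop) (σ : List (Set W)) : Set W :=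
  minIn (iterRev miniRev R σ) Set.univ

/-- Canonical learner induced by lexicographic upgrade and prior `R`. -/
def lexLearner (R : W → W → Prop) (σ : List (Set W)) : Set W :=
  minIn (iterRev lexRev R σ) Set.univ

/-- Canonical learner induced by conditioning and prior `R`:
minimal elements among the worlds surviving all observations in `σ`. -/
def condLearner (R : W → W → Prop) (σ : List (Set W)) : Set W :=
  minIn R {w | ∀ p ∈ σ, w ∈ p}

/-- A learner identifies state `s` in the limit. -/
def IdentifiesInLimit (O : Set (Set W)) (L : List (Set W) → Set W) (s : W) : Prop :=
  ∀ f : ℕ → Set W, StreamIn O f → SoundStream s f → CompleteStream O s f →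
    ∃ n, ∀ k, n ≤ k → L (seg f k) = {s}

/-- Finite identification: the learner makes exactly one guess, and it is correct. -/
def FinitelyIdentifies (O : Set (Set W)) (L : List (Set W) → Option W) (s : W) : Prop :=
  ∀ f : ℕ → Set W, StreamIn O f → SoundStream s f → CompleteStream O s f →
    ∃ n, L (seg f n) = some s ∧ ∀ m, m ≠ n → L (seg f m) = none

/-- A definite finite tell-tale map. -/
def DFTTMap (O : Set (Set W)) (D : W → Set (Set W)) : Prop :=
  ∀ s : W, (D s).Finite ∧ D s ⊆ obsAt O s ∧ ∀ t : W, D s ⊆ obsAt O t → s = t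

/-- A finite space mini tell-tale map for `R` and the space. -/
def FSMiniTellTaleMap (O : Set (Set W)) (R : W → W → Prop) (F : W → Set (Set W)) : Prop :=
  ∀ s : W, F s ⊆ obsAt O s ∧
    ∃ p ∈ F s, s ∈ minIn R p ∧
      ∀ t : W, t ≠ s → (R s t ∧ R t s) → t ∈ minIn R p →
        ∃ q ∈ F s, s ∈ minIn R q ∧ t ∉ minIn R q

/-- A generalised conditioning tell-tale map for `R` and the space. -/
def GenCondTellTaleMap (O : Set (Set W)) (R : W → W → Prop) (F : W → Set (Set W)) : Prop :=
  ∀ s : W,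
    (F s).Finite ∧ F s ⊆ obsAt O s ∧
    (∀ t : W, (R s t ∨ R t s) → F s ⊆ obsAt O t → s ≠ t → strictR R s t) ∧
    (∀ F' : Set (Set W), F'.Finite → F s ⊆ F' → F' ⊆ obsAt O s →
      ∀ t : W, ¬ (R s t ∨ R t s) → F' ⊆ obsAt O t →
        ∃ v : W, strictR R v t ∧ F' ⊆ obsAt O v)

/-- Fair data stream w.r.t. `s` (finitely many, eventually corrected, errors). -/
def FairStream (O : Set (Set W)) (s : W) (f : ℕ → Set W) : Prop :=
  CompleteStream O s f ∧ (∃ n, ∀ k, n ≤ k → s ∈ f k) ∧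
    (∀ i, s ∉ f i → ∃ k, i < k ∧ f k = (f i)ᶜ)



open scoped Classical

/-- Length of the longest prefix of `σ` all of whose members contain `x`. -/
noncomputable def tau : List (Set W) → W → ℕ
  | [], _ => 0
  | p :: σ, x => if x ∈ p then tau σ x + 1 else 0

lemma tau_le (σ : List (Set W)) (x : W) : tau σ x ≤ σ.length := by
  induction σ with
  | nil => simp [tau]
  | cons p σ ih =>
    simp only [tau, List.length_cons]
    split <;> omega

lemma tau_eq_length_iff (σ : List (Set W)) (x : W) :
    tau σ x = σ.length ↔ ∀ p ∈ σ, x ∈ p := by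
  induction σ with
  | nil => simp [tau]
  | cons p σ ih =>
    simp only [tau, List.length_cons, List.mem_cons]
    by_cases h : x ∈ p
    · simp only [if_pos h]
      constructor
      · intro he q hq
        rcases hq with rfl | hq
        · exact h
        · exact (ih.mp (by omega)) q hq
      · intro hall
        have := ih.mpr (fun q hq => hall q (Or.inr hq))
        omega
    · simp only [if_neg h]
      constructor
      · omega
      · intro hall; exact absurd (hall p (Or.inl rfl)) h

lemma tau_concat (σ : List (Set W)) (p : Set W) (x : W) :
    tau (σ ++ [p]) x =
      if tau σ x = σ.length ∧ x ∈ p then σ.length + 1 else tau σ x := by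
  induction σ with
  | nil =>
    by_cases h : x ∈ p <;> simp [tau, h]
  | cons q σ ih =>
    have hstep : tau ((q :: σ) ++ [p]) x = if x ∈ q then tau (σ ++ [p]) x + 1 else 0 := rfl
    have hstep2 : tau (q :: σ) x = if x ∈ q then tau σ x + 1 else 0 := rfl
    rw [hstep, ih, hstep2]
    simp only [List.length_cons]
    by_cases hq : x ∈ q
    · rw [if_pos hq, if_pos hq]
      by_cases h : tau σ x = σ.length ∧ x ∈ p
      · rw [if_pos h, if_pos ⟨by rw [h.1], h.2⟩]
      · rw [if_neg h, if_neg (by rintro ⟨h1, h2⟩; exact h ⟨by omega, h2⟩)]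
    · rw [if_neg hq, if_neg hq, if_neg (by rintro ⟨h1, _⟩; omega)]

lemma iterRev_tau (s : W) :
    ∀ σ : List (Set W), (∀ p ∈ σ, s ∈ p) →
      ∀ x y, iterRev miniRev (fun _ _ : W => True) σ x y ↔ tau σ y ≤ tau σ x := by
  intro σ
  induction σ using List.reverseRecOn with
  | nil => intro _ x y; simp [iterRev, tau]
  | append_singleton σ p ih =>
    intro hmem x y
    have hσ : ∀ q ∈ σ, s ∈ q := fun q hq => hmem q (by simp [hq])
    have hsp : s ∈ p := hmem p (by simp)
    have hR := ih hσ
    have hiter : iterRev miniRev (fun _ _ : W => True) (σ ++ [p]) =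
        miniRev (iterRev miniRev (fun _ _ : W => True) σ) p := by
      simp [iterRev, List.foldl_append]
    have htaus : tau σ s = σ.length := (tau_eq_length_iff σ s).mpr hσ
    have hM : ∀ z : W, z ∈ minIn (iterRev miniRev (fun _ _ : W => True) σ) p ↔
        (z ∈ p ∧ tau σ z = σ.length) := by
      intro z
      constructor
      · rintro ⟨hzp, hmin⟩
        refine ⟨hzp, ?_⟩
        have := hmin s hsp (by rw [hR, hR]; omega)
        rw [hR] at this
        have := tau_le σ z
        omega
      · rintro ⟨hzp, hz⟩
        refine ⟨hzp, fun t htp _ => ?_⟩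
        rw [hR]
        have := tau_le σ t
        omega
    rw [hiter]
    have hx' := tau_le σ x
    have hy' := tau_le σ y
    simp only [miniRev, hM, hR, tau_concat]
    by_cases hx : x ∈ p ∧ tau σ x = σ.length <;>
      by_cases hy : y ∈ p ∧ tau σ y = σ.length
    · rw [if_pos ⟨hy.2, hy.1⟩, if_pos ⟨hx.2, hx.1⟩]
      exact ⟨fun _ => le_refl _, fun _ => Or.inr ⟨by omega, fun hc => hc.2 hx⟩⟩
    · rw [if_neg (fun hc => hy ⟨hc.2, hc.1⟩), if_pos ⟨hx.2, hx.1⟩]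
      exact ⟨fun _ => by omega, fun _ => Or.inl ⟨hx, hy⟩⟩
    · rw [if_pos ⟨hy.2, hy.1⟩, if_neg (fun hc => hx ⟨hc.2, hc.1⟩)]
      constructor
      · rintro (⟨h1, h2⟩ | ⟨h1, h2⟩)
        · exact absurd h1 hx
        · exact absurd ⟨hy, hx⟩ h2
      · intro h; omega
    · rw [if_neg (fun hc => hy ⟨hc.2, hc.1⟩), if_neg (fun hc => hx ⟨hc.2, hc.1⟩)]
      constructor
      · rintro (⟨h1, _⟩ | ⟨h1, _⟩)
        · exact absurd h1 hx
        · exact h1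
      · intro h; exact Or.inr ⟨h, fun hc => hy hc.1⟩

/-- Minimal revision (with uniform prior) identifies in the limit every
finite strongly separated epistemic space. -/
theorem mini_universal_on_finite_strongly_separated {W : Type*} [Finite W]
    (O : Set (Set W)) (hsep : Separating O)
    (hss : ∀ s t : W, s ≠ t → ¬ obsAt O s ⊆ obsAt O t) :
    ∀ s : W, IdentifiesInLimit O (miniLearner (fun _ _ : W => True)) s := by
  intro s f hin hsound hcomp
  classical
  haveI := Fintype.ofFinite W
  -- for each t ≠ s, an index where t is refuted
  have hwit : ∀ t : W, ∃ n : ℕ, t ≠ s → t ∉ f n := by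
    intro t
    by_cases hts : t = s
    · exact ⟨0, fun h => absurd hts h⟩
    · obtain ⟨p, hps, hpt⟩ := Set.not_subset.mp (hss s t (Ne.symm hts))
      obtain ⟨n, hn⟩ := hcomp p hps
      refine ⟨n, fun _ hmem => hpt ?_⟩
      exact ⟨hps.1, by rwa [hn] at hmem⟩
  choose g hg using hwit
  refine ⟨Finset.univ.sup g + 1, fun k hk => ?_⟩
  set σ := seg f k with hσdef
  have hlen : σ.length = k := by simp [hσdef, seg]
  have hmemσ : ∀ p ∈ σ, s ∈ p := by
    intro p hp
    simp only [hσdef, seg, List.mem_map, List.mem_range] at hp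
    obtain ⟨i, _, rfl⟩ := hp
    exact hsound i
  have hR := iterRev_tau s σ hmemσ
  have htaus : tau σ s = k := by rw [← hlen]; exact (tau_eq_length_iff σ s).mpr hmemσ
  have htaut : ∀ t : W, t ≠ s → tau σ t < k := by
    intro t hts
    have hgk : g t < k := by
      have : g t ≤ Finset.univ.sup g := Finset.le_sup (Finset.mem_univ t)
      omega
    have hne : tau σ t ≠ k := by
      rw [← hlen]
      intro hc
      exact hg t hts ((tau_eq_length_iff σ t).mp hc (f (g t))
        (by simp only [hσdef, seg, List.mem_map, List.mem_range]; exact ⟨g t, hgk, rfl⟩))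
    have := tau_le σ t
    omega
  ext x
  simp only [miniLearner, minIn, Set.mem_setOf_eq, Set.mem_univ, true_and,
    Set.mem_singleton_iff]
  constructor
  · intro hx
    by_contra hxs
    have := hx s trivial (by rw [hR, hR]; omega)
    rw [hR] at this
    have := htaut x hxs
    omega
  · intro hxs t _ _
    rw [hR]
    have hx : tau σ x = k := by rw [hxs]; exact htaus
    by_cases hts : t = s
    · have : tau σ t = k := by rw [hts]; exact htaus
      omega
    · have := htaut t hts
      omega


end Epi
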